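/- Let n ∈ ℕ, n ≥ 1, let η : Fin n → Fin n → ℝ, let B : Fin n → Fin n → Fin n → ℝ satisfy ∑_{i} B i h k = 1 for all h, k, and suppose μ i k t = 0 for all i, k, t and λ i t = 0 for all i, t (the conservative case). If f : ℝ → (Fin n → ℝ) is differentiable on [0, t₀] and satisfies for all t ∈ [0, t₀] and all i the equation (f i)'(t) = ∑_{h,k} η h k · B i h k · f h t · f k t − f i t · ∑_{k} η i k · f k t, then the total density is conserved: ∑_{i} f i t = ∑_{i} f i 0 for all t ∈ [0, t₀]. In particular, if ∑_{i} f i 0 = 1, then ∑_{i} f i t = 1 for all t ∈ [0, t₀]. -/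

import Mathlib

open Set

/-- In the conservative case (μ ≡ 0, λ ≡ 0) the total density is conserved; in
particular if it equals 1 initially it equals 1 for all times. -/
theorem stmt_8 (n : ℕ) (hn : 1 ≤ n) (t₀ : ℝ)
    (η : Fin n → Fin n → ℝ) (B : Fin n → Fin n → Fin n → ℝ)
    (hBsum : ∀ h k, ∑ i, B i h k = 1)
    (μ : Fin n → Fin n → ℝ → ℝ) (lam : Fin n → ℝ → ℝ)
    (hμ : ∀ i k t, μ i k t = 0) (hlam : ∀ i t, lam i t = 0)
    (f : ℝ → Fin n → ℝ)
    (hf : ∀ t ∈ Icc (0:ℝ) t₀, ∀ i,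
      HasDerivWithinAt (fun s => f s i)
        ((∑ h, ∑ k, η h k * B i h k * f t h * f t k)
          - f t i * (∑ k, η i k * f t k)) (Icc (0:ℝ) t₀) t) :
    (∀ t ∈ Icc (0:ℝ) t₀, ∑ i, f t i = ∑ i, f 0 i) ∧
    ((∑ i, f 0 i) = 1 → ∀ t ∈ Icc (0:ℝ) t₀, ∑ i, f t i = 1) := by
  have key : ∀ t : ℝ,
      (∑ i, ((∑ h, ∑ k, η h k * B i h k * f t h * f t k)
        - f t i * (∑ k, η i k * f t k))) = 0 := by
    intro t
    rw [Finset.sum_sub_distrib, sub_eq_zero]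
    have h1 : (∑ i, ∑ h, ∑ k, η h k * B i h k * f t h * f t k)
        = ∑ h, ∑ k, η h k * f t h * f t k := by
      rw [Finset.sum_comm]
      refine Finset.sum_congr rfl fun h _ => ?_
      rw [Finset.sum_comm]
      refine Finset.sum_congr rfl fun k _ => ?_
      have : (∑ i, η h k * B i h k * f t h * f t k)
          = (∑ i, B i h k) * (η h k * f t h * f t k) := by
        rw [Finset.sum_mul]; refine Finset.sum_congr rfl fun i _ => by ring
      rw [this, hBsum, one_mul]
    rw [h1]
    refine Finset.sum_congr rfl fun i _ => ?_
    rw [Finset.mul_sum]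
    exact Finset.sum_congr rfl fun k _ => by ring
  have hF : ∀ t ∈ Icc (0:ℝ) t₀,
      HasDerivWithinAt (fun s => ∑ i, f s i) 0 (Icc (0:ℝ) t₀) t := by
    intro t ht
    have := HasDerivWithinAt.fun_sum (u := Finset.univ) (fun i _ => hf t ht i)
    rwa [key t] at this
  have hmain : ∀ t ∈ Icc (0:ℝ) t₀, ∑ i, f t i = ∑ i, f 0 i := by
    intro t ht
    rcases eq_or_lt_of_le ht.1 with h0 | h0
    · rw [← h0]
    · have ht₀ : (0:ℝ) < t₀ := lt_of_lt_of_le h0 ht.2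
      have hdiff : DifferentiableOn ℝ (fun s => ∑ i, f s i) (Icc (0:ℝ) t₀) :=
        fun x hx => (hF x hx).differentiableWithinAt
      have hderiv : ∀ x ∈ Ico (0:ℝ) t₀,
          derivWithin (fun s => ∑ i, f s i) (Icc (0:ℝ) t₀) x = 0 := by
        intro x hx
        exact (hF x (Ico_subset_Icc_self hx)).derivWithin
          (uniqueDiffOn_Icc ht₀ x (Ico_subset_Icc_self hx))
      exact constant_of_derivWithin_zero hdiff hderiv t ht
  exact ⟨hmain, fun h1 t ht => (hmain t ht).trans h1⟩
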